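/- Let X be an S_A-set and let Z ⊆ X be a uniformly supported subset, i.e. there exists a finite set T ⊆ A supporting every element of Z. Then supp(Z) (the support of Z as an element of the powerset with the induced action) equals the union ⋃_{x ∈ Z} supp(x). -/

import Mathlib

open Pointwise

/-- The group of finitary permutations of the set `A` of atoms:
bijections of `A` that move only finitely many atoms. -/
def finPerm (A : Type*) : Subgroup (Equiv.Perm A) where
  carrier := {π | {a | π a ≠ a}.Finite}
  one_mem' := by simp
  mul_mem' := by
    intro π σ hπ hσ
    apply Set.Finite.subset (hπ.union hσ)
    intro a ha
    by_contra hc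
    simp only [Set.mem_union, Set.mem_setOf_eq, not_or, not_not] at hc
    exact ha (by simp [Equiv.Perm.mul_apply, hc.1, hc.2])
  inv_mem' := by
    intro π hπ
    apply Set.Finite.subset hπ
    intro a ha
    simp only [Set.mem_setOf_eq] at ha ⊢
    intro h
    exact ha (Equiv.Perm.inv_eq_iff_eq.mpr h.symm)

/-- `x` is finitely supported: some finite set of atoms supports it. -/
def FinitelySupported (A : Type*) {X : Type*} [MulAction (finPerm A) X] (x : X) : Prop :=
  ∃ S : Set A, S.Finite ∧ MulAction.Supports (finPerm A) S x

/-- A subset `Z` of an `S_A`-set is uniformly supported if a single finite set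
of atoms supports every element of `Z`. -/
def UniformlySupported (A : Type*) {X : Type*} [MulAction (finPerm A) X] (Z : Set X) : Prop :=
  ∃ S : Set A, S.Finite ∧ ∀ x ∈ Z, MulAction.Supports (finPerm A) S x

/-- The least support of `x`: the intersection of all finite sets of atoms supporting `x`. -/
noncomputable def supp (A : Type*) {X : Type*} [MulAction (finPerm A) X] (x : X) : Set A :=
  ⋂₀ {S : Set A | S.Finite ∧ MulAction.Supports (finPerm A) S x}

/-- `Z` contains no infinite uniformly supported subset
(`Z` is "FSM non-uniformly infinite"). -/
def NoInfUS (A : Type*) {X : Type*} [MulAction (finPerm A) X] (Z : Set X) : Prop :=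
  ∀ W ⊆ Z, UniformlySupported A W → W.Finite

/-- The uniform powerset `℘_us(X)`: all uniformly supported subsets of `X`. -/
def usPowerset (A : Type*) {X : Type*} [MulAction (finPerm A) X] (Z : Set X) : Set (Set X) :=
  {W | W ⊆ Z ∧ UniformlySupported A W}

/-- The finite powerset `℘_fin(X)`: all finite subsets of `X`. -/
def finPowerset {X : Type*} (Z : Set X) : Set (Set X) :=
  {W | W ⊆ Z ∧ W.Finite}

/-- `S` supports the function `f` on the domain `X` (Proposition 2.18'(2)):
for every `π` fixing `S` pointwise and every `x ∈ X`, `π • x ∈ X` and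
`f (π • x) = π • f x`. -/
def FnSupportsOn (A : Type*) {Y : Type*} [MulAction (finPerm A) Y]
    (X : Set Y) (S : Set A) (f : Y → Y) : Prop :=
  ∀ π : finPerm A, (∀ a ∈ S, π • a = a) → ∀ x ∈ X, π • x ∈ X ∧ f (π • x) = π • f x

/-- The least support of a function `f` with domain `X`. -/
noncomputable def fnSupp (A : Type*) {Y : Type*} [MulAction (finPerm A) Y]
    (X : Set Y) (f : Y → Y) : Set A :=
  ⋂₀ {S : Set A | S.Finite ∧ FnSupportsOn A X S f}


section AuxLemmas

open MulAction

variable {A : Type*} {X : Type*} [MulAction (finPerm A) X]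

/-- A transposition as an element of `finPerm A`. -/
def fpSwap [DecidableEq A] (a b : A) : finPerm A :=
  ⟨Equiv.swap a b, by
    apply Set.Finite.subset ((Set.finite_singleton b).insert a)
    intro c hc
    simp only [Set.mem_setOf_eq] at hc
    rw [Set.mem_insert_iff, Set.mem_singleton_iff]
    by_contra hcon
    push_neg at hcon
    exact hc (Equiv.swap_apply_of_ne_of_ne hcon.1 hcon.2)⟩

lemma fpSwap_smul [DecidableEq A] (a b c : A) : fpSwap a b • c = Equiv.swap a b c := rfl

lemma supports_inter {x : X} {S1 S2 : Set A} (h1 : S1.Finite) (h2 : S2.Finite)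
    (hs1 : Supports (finPerm A) S1 x) (hs2 : Supports (finPerm A) S2 x)
    [Infinite A] :
    Supports (finPerm A) (S1 ∩ S2) x := by
  classical
  suffices H : ∀ n (π : finPerm A), (∀ a ∈ S1 ∩ S2, π • a = a) →
      (h1.toFinset.filter (fun b => (π : Equiv.Perm A) b ≠ b)).card ≤ n → π • x = x by
    intro π hπ
    exact H _ π hπ le_rfl
  intro n
  induction n with
  | zero =>
    intro π hπ hcard
    apply hs1
    intro a ha
    by_contra hne
    have hmem : a ∈ h1.toFinset.filter (fun b => (π : Equiv.Perm A) b ≠ b) := by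
      simp only [Finset.mem_filter, Set.Finite.mem_toFinset]
      exact ⟨ha, hne⟩
    have := Finset.card_pos.mpr ⟨a, hmem⟩
    omega
  | succ n ih =>
    intro π hπ hcard
    by_cases hD : (h1.toFinset.filter (fun b => (π : Equiv.Perm A) b ≠ b)) = ∅
    · apply hs1
      intro a ha
      by_contra hne
      have hmem : a ∈ h1.toFinset.filter (fun b => (π : Equiv.Perm A) b ≠ b) := by
        simp only [Finset.mem_filter, Set.Finite.mem_toFinset]
        exact ⟨ha, hne⟩
      rw [hD] at hmem
      exact absurd hmem (Finset.notMem_empty a)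
    · obtain ⟨a, haD⟩ := Finset.nonempty_iff_ne_empty.mpr hD
      have haD' := haD
      simp only [Finset.mem_filter, Set.Finite.mem_toFinset] at haD'
      obtain ⟨haS1, hamoved⟩ := haD'
      have haS2 : a ∉ S2 := fun h => hamoved (hπ a ⟨haS1, h⟩)
      have hfin : (S1 ∪ S2 ∪ {b | (π : Equiv.Perm A) b ≠ b} ∪ {a}).Finite :=
        ((h1.union h2).union π.2).union (Set.finite_singleton a)
      obtain ⟨c, hc⟩ := hfin.infinite_compl.nonempty
      simp only [Set.mem_compl_iff, Set.mem_union, Set.mem_setOf_eq,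
        Set.mem_singleton_iff, not_or] at hc
      obtain ⟨⟨⟨hcS1, hcS2⟩, hcmov⟩, hca⟩ := hc
      have hπc : (π : Equiv.Perm A) c = c := not_not.mp hcmov
      set τ := fpSwap a c with hτdef
      have hτa : (τ : Equiv.Perm A) a = c := Equiv.swap_apply_left a c
      have hτc : (τ : Equiv.Perm A) c = a := Equiv.swap_apply_right a c
      have hτother : ∀ b, b ≠ a → b ≠ c → (τ : Equiv.Perm A) b = b :=
        fun b h1 h2 => Equiv.swap_apply_of_ne_of_ne h1 h2
      have hτx : τ • x = x := by
        apply hs2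
        intro b hb
        have hba : b ≠ a := fun h => haS2 (h ▸ hb)
        have hbc : b ≠ c := fun h => hcS2 (h ▸ hb)
        exact hτother b hba hbc
      set σ := τ * π * τ with hσdef
      have hσapp : ∀ b, (σ : Equiv.Perm A) b
          = (τ : Equiv.Perm A) ((π : Equiv.Perm A) ((τ : Equiv.Perm A) b)) := by
        intro b
        simp [hσdef, Equiv.Perm.mul_apply]
      have hσa : (σ : Equiv.Perm A) a = a := by
        rw [hσapp, hτa, hπc, hτc]
      have hσfix : ∀ b ∈ S1 ∩ S2, σ • b = b := by
        intro b hb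
        rcases eq_or_ne b a with rfl | hba
        · exact hσa
        · have hbc : b ≠ c := fun h => hcS1 (h ▸ hb.1)
          show (σ : Equiv.Perm A) b = b
          have hπb : (π : Equiv.Perm A) b = b := hπ b hb
          rw [hσapp, hτother b hba hbc, hπb, hτother b hba hbc]
      have hsub : (h1.toFinset.filter (fun b => (σ : Equiv.Perm A) b ≠ b))
          ⊆ (h1.toFinset.filter (fun b => (π : Equiv.Perm A) b ≠ b)).erase a := by
        intro b hb
        simp only [Finset.mem_filter, Set.Finite.mem_toFinset] at hb
        obtain ⟨hbS1, hbmov⟩ := hb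
        have hba : b ≠ a := fun h => hbmov (h ▸ hσa)
        have hbc : b ≠ c := fun h => hcS1 (h ▸ hbS1)
        refine Finset.mem_erase.mpr ⟨hba, ?_⟩
        simp only [Finset.mem_filter, Set.Finite.mem_toFinset]
        refine ⟨hbS1, fun h => hbmov ?_⟩
        rw [hσapp, hτother b hba hbc, h, hτother b hba hbc]
      have hσcard : (h1.toFinset.filter (fun b => (σ : Equiv.Perm A) b ≠ b)).card ≤ n := by
        have h1c := Finset.card_le_card hsub
        have h2c := Finset.card_erase_of_mem haD
        omega
      have hσx : σ • x = x := ih σ hσfix hσcard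
      have hτπx : τ • (π • x) = x := by
        have : σ • x = τ • (π • x) := by
          rw [hσdef, mul_smul, mul_smul, hτx]
        rw [← this, hσx]
      calc π • x = τ⁻¹ • (τ • (π • x)) := (inv_smul_smul τ _).symm
        _ = τ⁻¹ • x := by rw [hτπx]
        _ = τ⁻¹ • (τ • x) := by rw [hτx]
        _ = x := inv_smul_smul τ x

lemma supp_subset_of_supports {x : X} {S : Set A} (hf : S.Finite)
    (hs : Supports (finPerm A) S x) : supp A x ⊆ S :=
  Set.sInter_subset_of_mem ⟨hf, hs⟩

lemma supp_supports [Infinite A] {x : X} {T : Set A} (hTfin : T.Finite)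
    (hTsup : Supports (finPerm A) T x) : Supports (finPerm A) (supp A x) x := by
  have key : ∀ B : Set A, B.Finite → (∀ a ∈ B, a ∉ supp A x) →
      ∃ S : Set A, S.Finite ∧ Supports (finPerm A) S x ∧ S ⊆ T \ B := by
    intro B hB
    refine Set.Finite.induction_on
      (motive := fun B _ => (∀ a ∈ B, a ∉ supp A x) →
        ∃ S : Set A, S.Finite ∧ Supports (finPerm A) S x ∧ S ⊆ T \ B) B hB ?_ ?_
    · exact fun _ => ⟨T, hTfin, hTsup, by simp⟩
    · intro a B haB hBfin ih h
      obtain ⟨S, hSfin, hSsup, hSsub⟩ := ih (fun b hb => h b (Set.mem_insert_of_mem a hb))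
      have ha : a ∉ supp A x := h a (Set.mem_insert a B)
      simp only [supp, Set.mem_sInter] at ha
      push_neg at ha
      obtain ⟨S', hS', haS'⟩ := ha
      obtain ⟨hS'fin, hS'sup⟩ := hS'
      refine ⟨S ∩ S', hSfin.inter_of_left _, supports_inter hSfin hS'fin hSsup hS'sup, ?_⟩
      intro b hb
      have := hSsub hb.1
      refine ⟨this.1, ?_⟩
      simp only [Set.mem_insert_iff, not_or]
      exact ⟨fun h => haS' (h ▸ hb.2), this.2⟩
  obtain ⟨S, hSfin, hSsup, hSsub⟩ := key (T \ supp A x) hTfin.diff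
    (fun a ha => ha.2)
  have hSsupp : S ⊆ supp A x := by
    intro b hb
    have := hSsub hb
    by_contra hc
    exact this.2 ⟨this.1, hc⟩
  intro π hπ
  exact hSsup π (fun a ha => hπ (hSsupp ha))

lemma supports_preimage {x : X} {T : Set A} (π : finPerm A)
    (hT : Supports (finPerm A) T (π • x)) :
    Supports (finPerm A) ((π : Equiv.Perm A) ⁻¹' T) x := by
  intro σ hσ
  have h2 : ∀ a ∈ T, (π * σ * π⁻¹) • a = a := by
    intro t ht
    have hmem : (π : Equiv.Perm A)⁻¹ t ∈ (π : Equiv.Perm A) ⁻¹' T := by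
      simp [Set.mem_preimage, ht]
    have hfix : (σ : Equiv.Perm A) ((π : Equiv.Perm A)⁻¹ t) = (π : Equiv.Perm A)⁻¹ t :=
      hσ hmem
    show ((π * σ * π⁻¹ : finPerm A) : Equiv.Perm A) t = t
    simp only [Subgroup.coe_mul, InvMemClass.coe_inv, Equiv.Perm.mul_apply]
    rw [hfix]
    simp
  have h3 := hT _ h2
  rw [mul_smul, mul_smul, inv_smul_smul] at h3
  calc σ • x = π⁻¹ • (π • (σ • x)) := (inv_smul_smul π _).symm
    _ = π⁻¹ • (π • x) := by rw [h3]
    _ = x := inv_smul_smul π x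

end AuxLemmas

/-- for a uniformly supported subset `Z` of an `S_A`-set `X`,
`supp Z = ⋃_{x ∈ Z} supp x`. -/
theorem stmt2 {A X : Type*} [Infinite A] [MulAction (finPerm A) X]
    (Z : Set X) (hZ : UniformlySupported A Z) :
    supp A Z = ⋃ x ∈ Z, supp A x := by
  classical
  obtain ⟨T, hTfin, hTsup⟩ := hZ
  apply Set.Subset.antisymm
  · apply Set.sInter_subset_of_mem
    constructor
    · apply hTfin.subset
      apply Set.iUnion₂_subset
      intro x hx
      exact supp_subset_of_supports hTfin (hTsup x hx)
    · intro π hπ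
      have hfix : ∀ x ∈ Z, π • x = x := by
        intro x hx
        apply supp_supports hTfin (hTsup x hx) π
        intro a ha
        exact hπ (Set.mem_biUnion hx ha)
      ext y
      rw [Set.mem_smul_set]
      constructor
      · rintro ⟨x, hx, rfl⟩
        rw [hfix x hx]
        exact hx
      · intro hy
        exact ⟨y, hy, hfix y hy⟩
  · apply Set.iUnion₂_subset
    intro x hx a ha
    simp only [supp, Set.mem_sInter]
    rintro S ⟨hSfin, hSsup⟩
    by_contra haS
    obtain ⟨b, hb⟩ := ((hSfin.union hTfin).union (Set.finite_singleton a)).infinite_compl.nonempty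
    simp only [Set.mem_compl_iff, Set.mem_union, Set.mem_singleton_iff, not_or] at hb
    obtain ⟨⟨hbS, hbT⟩, hba⟩ := hb
    set π := fpSwap a b with hπdef
    have hπS : ∀ c ∈ S, π • c = c := by
      intro c hc
      have hca : c ≠ a := fun h => haS (h ▸ hc)
      have hcb : c ≠ b := fun h => hbS (h ▸ hc)
      exact Equiv.swap_apply_of_ne_of_ne hca hcb
    have hπZ : π • Z = Z := hSsup π hπS
    have hπx : π • x ∈ Z := by
      rw [← hπZ]
      exact Set.smul_mem_smul_set hx
    have hsup' : MulAction.Supports (finPerm A) ((π : Equiv.Perm A) ⁻¹' T) x :=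
      supports_preimage π (hTsup _ hπx)
    have hfin' : ((π : Equiv.Perm A) ⁻¹' T).Finite :=
      hTfin.preimage (Set.injOn_of_injective (π : Equiv.Perm A).injective)
    have haT : a ∈ (π : Equiv.Perm A) ⁻¹' T := supp_subset_of_supports hfin' hsup' ha
    rw [Set.mem_preimage] at haT
    have : (π : Equiv.Perm A) a = b := Equiv.swap_apply_left a b
    rw [this] at haT
    exact hbT haT
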